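/- arXiv:2002.04474 — 6 statements merged into one kernel-verified Lean document; each statement's English description precedes it below -/
import Mathlib

section
/- Let A : L²(Ω) → Y be a bounded linear operator between the real Hilbert space L²(Ω) (Ω a bounded domain in ℝ^d) and a Hilbert space Y, let y ∈ Y, and assume the set X̄ = {x ∈ L²₊(Ω) : Ax = y} of non-negative solutions is non-empty. If an element x* ∈ L²₊(Ω) satisfies r := A*(Ax* − y) ∈ L²₊(Ω) and ⟨x*, r⟩ = 0, then x* solves the operator equation, i.e. Ax* = y. -/
open MeasureTheory Filter Topology ContinuousLinearMap
open scoped RealInnerProductSpace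

lemma inner_nonneg_of_nonneg {α : Type*} {m : MeasurableSpace α} {μ : Measure α}
    (f g : Lp ℝ 2 μ) (hf : 0 ≤ f) (hg : 0 ≤ g) : (0 : ℝ) ≤ ⟪f, g⟫ := by
  rw [MeasureTheory.L2.inner_def]
  apply integral_nonneg_of_ae
  filter_upwards [(Lp.coeFn_nonneg f).2 hf, (Lp.coeFn_nonneg g).2 hg] with a hfa hga
  simpa using mul_nonneg hga hfa

/-- **Lemma 1.** If `x* ∈ L²₊(Ω)` satisfies `r := A*(Ax* − y) ∈ L²₊(Ω)` and `⟨x*, r⟩ = 0`,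
and the set of non-negative solutions of `A x = y` is non-empty, then `A x* = y`. -/
theorem stmt_0
    {d : ℕ} (Ω : Set (EuclideanSpace ℝ (Fin d)))
    (hΩ_open : IsOpen Ω) (hΩ_bdd : Bornology.IsBounded Ω)
    (ν : Measure (EuclideanSpace ℝ (Fin d))) (hν : ν = volume.restrict Ω)
    {Y : Type*} [NormedAddCommGroup Y] [InnerProductSpace ℝ Y] [CompleteSpace Y]
    (A : Lp ℝ 2 ν →L[ℝ] Y) (y : Y)
    (hsol : ∃ x : Lp ℝ 2 ν, 0 ≤ x ∧ A x = y)
    (xstar : Lp ℝ 2 ν) (hxstar : 0 ≤ xstar)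
    (hr : 0 ≤ adjoint A (A xstar - y))
    (hortho : ⟪xstar, adjoint A (A xstar - y)⟫ = (0 : ℝ)) :
    A xstar = y := by
  obtain ⟨x0, hx0, hAx0⟩ := hsol
  set r := adjoint A (A xstar - y) with hrdef
  have key : ‖A xstar - y‖ ^ 2 = ⟪xstar - x0, r⟫ := by
    rw [hrdef, real_inner_comm, adjoint_inner_left, map_sub, hAx0,
      real_inner_self_eq_norm_sq]
  have h1 : ⟪xstar - x0, r⟫ = -⟪x0, r⟫ := by
    rw [inner_sub_left, hortho]; ring
  have h2 : (0 : ℝ) ≤ ⟪x0, r⟫ := inner_nonneg_of_nonneg x0 r hx0 hr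
  have : ‖A xstar - y‖ ^ 2 ≤ 0 := by rw [key, h1]; linarith
  have : ‖A xstar - y‖ = 0 := by nlinarith [norm_nonneg (A xstar - y)]
  have := norm_eq_zero.mp this
  exact sub_eq_zero.mp this
end

section
/- Let A : L²(Ω) → Y be a bounded linear operator between Hilbert spaces, y ∈ Y, and let G be the multiplication operator [Gx](t) = m(t)x(t) with m ∈ L^∞(Ω) satisfying 0 < m̲ ≤ m(t) ≤ m̄ < ∞ almost everywhere. If the set X̄ = {x ∈ L²₊(Ω) : Ax = y} is non-empty, then X̄ coincides with the solution set X̂ = {x ∈ L²(Ω) : (G + A*A)x = (G − A*A)|x| + 2A*y} of the fixed-point-type equation; in particular every solution of the fixed-point equation has vanishing negative part. -/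
open MeasureTheory Filter Topology ContinuousLinearMap
open scoped RealInnerProductSpace

/-- **Proposition 1.** For a multiplication-type strictly positive definite operator `G`,
the solution set of the fixed-point-type equation `(G + A*A)x = (G − A*A)|x| + 2A*y`
coincides with the set of non-negative solutions of `A x = y` (assumed non-empty);
in particular every solution of the fixed-point equation has vanishing negative part. -/
theorem stmt_2
    {d : ℕ} (Ω : Set (EuclideanSpace ℝ (Fin d)))
    (hΩ_open : IsOpen Ω) (hΩ_bdd : Bornology.IsBounded Ω)
    (ν : Measure (EuclideanSpace ℝ (Fin d))) (hν : ν = volume.restrict Ω)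
    {Y : Type*} [NormedAddCommGroup Y] [InnerProductSpace ℝ Y] [CompleteSpace Y]
    (A : Lp ℝ 2 ν →L[ℝ] Y) (y : Y)
    (G : Lp ℝ 2 ν →L[ℝ] Lp ℝ 2 ν)
    (m : EuclideanSpace ℝ (Fin d) → ℝ) (mlo mhi : ℝ) (hmlo : 0 < mlo)
    (hm : ∀ᵐ t ∂ν, mlo ≤ m t ∧ m t ≤ mhi)
    (hG : ∀ x : Lp ℝ 2 ν, ⇑(G x) =ᵐ[ν] fun t => m t * x t)
    (hsol : ∃ x : Lp ℝ 2 ν, 0 ≤ x ∧ A x = y) :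
    {x : Lp ℝ 2 ν |
        (G + adjoint A ∘L A) x = (G - adjoint A ∘L A) (|x|) + (2 : ℝ) • adjoint A y}
      = {x : Lp ℝ 2 ν | 0 ≤ x ∧ A x = y} := by
  obtain ⟨xb, hxb0, hxbA⟩ := hsol
  ext x
  simp only [Set.mem_setOf_eq]
  constructor
  · intro hx
    set p : Lp ℝ 2 ν := x⁺ with hpdef
    set n : Lp ℝ 2 ν := x⁻ with hndef
    -- pointwise descriptions of p and n
    have hp : ⇑p =ᵐ[ν] fun t => max (x t) 0 := by
      have h1 := Lp.coeFn_sup x (0 : Lp ℝ 2 ν)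
      have h2 := Lp.coeFn_zero ℝ 2 ν
      rw [hpdef, posPart_def]
      filter_upwards [h1, h2] with t h1 h2
      rw [h1, Pi.sup_apply, h2, Pi.zero_apply]
    have hn : ⇑n =ᵐ[ν] fun t => max (-x t) 0 := by
      have h1 := Lp.coeFn_sup (-x) (0 : Lp ℝ 2 ν)
      have h2 := Lp.coeFn_zero ℝ 2 ν
      have h3 := Lp.coeFn_neg x
      rw [hndef, negPart_def]
      filter_upwards [h1, h2, h3] with t h1 h2 h3
      rw [h1, Pi.sup_apply, h2, h3, Pi.zero_apply, Pi.neg_apply]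
    have h1 : p - n = x := posPart_sub_negPart x
    have h2 : p + n = |x| := posPart_add_negPart x
    rw [← h2, ← h1] at hx
    simp only [add_apply, sub_apply, comp_apply, map_sub, map_add] at hx
    have key : adjoint A (A p - y) = G n := by
      rw [map_sub]
      linear_combination (norm := module) (2⁻¹ : ℝ) • hx
    -- A p = y
    have hzero : ⟪G n, p⟫ = 0 := by
      rw [L2.inner_def]
      rw [show (0 : ℝ) = ∫ _t, (0:ℝ) ∂ν by simp]
      apply integral_congr_ae
      filter_upwards [hG n, hp, hn] with t hGt hpt hnt
      simp only [RCLike.inner_apply, conj_trivial, hGt, hpt, hnt]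
      rcases le_total (x t) 0 with h | h
      · simp [max_eq_right h]
      · have : -x t ≤ 0 := neg_nonpos.mpr h
        simp [max_eq_right this]
    have hnonneg : 0 ≤ ⟪G n, xb⟫ := by
      rw [L2.inner_def]
      apply integral_nonneg_of_ae
      filter_upwards [hG n, hn, (Lp.coeFn_nonneg xb).mpr hxb0, hm] with t hGt hnt hxbt hmt
      simp only [RCLike.inner_apply, conj_trivial, hGt, hnt]
      have h0 : 0 ≤ m t := le_trans hmlo.le hmt.1
      exact mul_nonneg hxbt (mul_nonneg h0 (le_max_right _ _))
    have hApy : A p - y = 0 := by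
      rw [← real_inner_self_nonpos]
      have hcalc : ⟪A p - y, A p - y⟫ = ⟪G n, p⟫ - ⟪G n, xb⟫ := by
        calc ⟪A p - y, A p - y⟫ = ⟪A p - y, A (p - xb)⟫ := by rw [map_sub, hxbA]
          _ = ⟪adjoint A (A p - y), p - xb⟫ := (adjoint_inner_left A _ _).symm
          _ = ⟪G n, p - xb⟫ := by rw [key]
          _ = ⟪G n, p⟫ - ⟪G n, xb⟫ := inner_sub_right _ _ _
      rw [hcalc, hzero]
      linarith
    have hGn0 : G n = 0 := by rw [← key, hApy, map_zero]
    -- nonnegativity of x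
    have hmn : (fun t => m t * n t) =ᵐ[ν] 0 := by
      have h := hG n
      rw [hGn0] at h
      exact h.symm.trans (Lp.coeFn_zero ℝ 2 ν)
    have hx0 : 0 ≤ x := by
      rw [← Lp.coeFn_nonneg]
      filter_upwards [hmn, hn, hm] with t hmnt hnt hmt
      have hmpos : 0 < m t := lt_of_lt_of_le hmlo hmt.1
      have hn0 : n t = 0 := by
        rcases mul_eq_zero.mp hmnt with h | h
        · exact absurd h hmpos.ne'
        · exact h
      have : -x t ≤ 0 := by
        have := le_max_left (-x t) (0:ℝ)
        rw [← hnt, hn0] at this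
        exact this
      simpa using neg_nonpos.mp this
    refine ⟨hx0, ?_⟩
    have hneq : n = 0 := negPart_eq_zero.mpr hx0
    have hxp : x = p := by rw [← h1, hneq, sub_zero]
    rw [hxp]
    exact sub_eq_zero.mp hApy
  · rintro ⟨hx0, hxA⟩
    have habs : |x| = x := abs_of_nonneg hx0
    rw [habs]
    simp only [add_apply, sub_apply, comp_apply, hxA, two_smul]
    abel
end

section
/- Let A, A_h : L²(Ω) → Y be compact bounded linear operators with ‖A_h − A‖ ≤ h, and let G be a strictly positive definite self-adjoint bounded linear operator on L²(Ω). Then there exist constants C₁(A,G) > 0 and h₀(A,G) > 0, depending only on A and G, such that for all h ∈ (0, h₀]: ‖(G + A_h*A_h)⁻¹(G − A_h*A_h) − (G + A*A)⁻¹(G − A*A)‖ ≤ C₁(A,G) h. -/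
open MeasureTheory Filter Topology ContinuousLinearMap
open scoped RealInnerProductSpace

section Aux

variable {H : Type*} [NormedAddCommGroup H] [InnerProductSpace ℝ H] [CompleteSpace H]

/-- A coercive bounded operator on a real Hilbert space is a unit in the ring of
continuous linear endomorphisms, with inverse of norm at most `1/c`. -/
lemma coercive_isUnit (T : H →L[ℝ] H) (c : ℝ) (hc : 0 < c)
    (hT : ∀ x, c * ‖x‖ ^ 2 ≤ ⟪x, T x⟫) :
    ∃ u : (H →L[ℝ] H)ˣ, (u : H →L[ℝ] H) = T ∧
      ‖((u⁻¹ : (H →L[ℝ] H)ˣ) : H →L[ℝ] H)‖ ≤ 1 / c := by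
  have hlow : ∀ x, c * ‖x‖ ≤ ‖T x‖ := by
    intro x
    rcases eq_or_ne x 0 with rfl | hx
    · simp
    · have h1 := hT x
      have h2 : ⟪x, T x⟫ ≤ ‖x‖ * ‖T x‖ := real_inner_le_norm x (T x)
      have hxpos : 0 < ‖x‖ := norm_pos_iff.mpr hx
      nlinarith
  have hinj : T.ker = ⊥ := by
    rw [LinearMap.ker_eq_bot']
    intro x hx
    have h1 := hlow x
    rw [show T x = 0 from hx, norm_zero] at h1
    have hx0 : ‖x‖ ≤ 0 := by nlinarith [norm_nonneg x]
    exact norm_le_zero_iff.mp hx0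
  have hanti : AntilipschitzWith (Real.toNNReal c⁻¹) T := by
    apply ContinuousLinearMap.antilipschitz_of_bound
    intro x
    have h1 := hlow x
    rw [Real.coe_toNNReal _ (by positivity)]
    rw [inv_mul_eq_div, le_div_iff₀ hc, mul_comm]
    exact h1
  have hclosed : IsClosed (T.range : Set H) := by
    have h := hanti.isClosed_range T.uniformContinuous
    rw [show (T.range : Set H) = Set.range T from LinearMap.coe_range (T : H →ₗ[ℝ] H)]
    exact h
  haveI : CompleteSpace T.range := hclosed.completeSpace_coe
  have hsurj : T.range = ⊤ := by
    rw [← Submodule.orthogonal_eq_bot_iff]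
    rw [Submodule.eq_bot_iff]
    intro y hy
    have h0 : ⟪T y, y⟫ = 0 := hy (T y) (LinearMap.mem_range_self _ y)
    have h0' : ⟪y, T y⟫ = 0 := by rw [real_inner_comm]; exact h0
    have h1 := hT y
    rw [h0'] at h1
    have : ‖y‖ ^ 2 ≤ 0 := by nlinarith
    have : ‖y‖ ≤ 0 := by nlinarith [norm_nonneg y]
    exact norm_le_zero_iff.mp this
  set e := ContinuousLinearEquiv.ofBijective T hinj hsurj with he
  have hT_eq : ∀ x, e x = T x := fun x =>
    congrFun (ContinuousLinearEquiv.coeFn_ofBijective T hinj hsurj) x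
  refine ⟨⟨T, (e.symm : H →L[ℝ] H), ?_, ?_⟩, rfl, ?_⟩
  · ext x
    show T (e.symm x) = x
    rw [← hT_eq]
    exact e.apply_symm_apply x
  · ext x
    show e.symm (T x) = x
    rw [← hT_eq]
    exact e.symm_apply_apply x
  · show ‖(e.symm : H →L[ℝ] H)‖ ≤ 1 / c
    apply ContinuousLinearMap.opNorm_le_bound _ (by positivity)
    intro y
    have h1 := hlow (e.symm y)
    have h2 : T (e.symm y) = y := by rw [← hT_eq]; exact e.apply_symm_apply y
    rw [h2] at h1
    rw [div_mul_eq_mul_div, le_div_iff₀ hc]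
    calc ‖(e.symm : H →L[ℝ] H) y‖ * c = c * ‖e.symm y‖ := by
          rw [mul_comm]; rfl
      _ ≤ ‖y‖ := h1
      _ = 1 * ‖y‖ := (one_mul _).symm

end Aux

set_option maxHeartbeats 1000000 in
/-- **Lemma 2, inequality (14).** There are constants `C₁(A,G) > 0` and `h₀(A,G) > 0`,
depending only on `A` and `G`, such that for all `h ∈ (0, h₀]` and every compact `A_h` with
`‖A_h − A‖ ≤ h` one has
`‖(G + A_h*A_h)⁻¹(G − A_h*A_h) − (G + A*A)⁻¹(G − A*A)‖ ≤ C₁(A,G) h`. -/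
theorem stmt_3
    {d : ℕ} (Ω : Set (EuclideanSpace ℝ (Fin d)))
    (hΩ_open : IsOpen Ω) (hΩ_bdd : Bornology.IsBounded Ω)
    (ν : Measure (EuclideanSpace ℝ (Fin d))) (hν : ν = volume.restrict Ω)
    {Y : Type*} [NormedAddCommGroup Y] [InnerProductSpace ℝ Y] [CompleteSpace Y]
    (A : Lp ℝ 2 ν →L[ℝ] Y) (hA : IsCompactOperator ⇑A)
    (G : Lp ℝ 2 ν →L[ℝ] Lp ℝ 2 ν) (hGsa : IsSelfAdjoint G)
    (c : ℝ) (hc : 0 < c) (hGpos : ∀ x : Lp ℝ 2 ν, c * ‖x‖ ^ 2 ≤ ⟪x, G x⟫) :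
    ∃ C₁ > (0 : ℝ), ∃ h₀ > (0 : ℝ), ∀ h : ℝ, 0 < h → h ≤ h₀ →
      ∀ Ah : Lp ℝ 2 ν →L[ℝ] Y, IsCompactOperator ⇑Ah → ‖Ah - A‖ ≤ h →
        ‖Ring.inverse (G + adjoint Ah ∘L Ah) ∘L (G - adjoint Ah ∘L Ah)
            - Ring.inverse (G + adjoint A ∘L A) ∘L (G - adjoint A ∘L A)‖ ≤ C₁ * h := by
  set H := Lp ℝ 2 ν
  -- coercivity of `G + B*B` for any `B`
  have coer : ∀ B : H →L[ℝ] Y, ∀ x : H,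
      c * ‖x‖ ^ 2 ≤ ⟪x, (G + adjoint B ∘L B) x⟫ := by
    intro B x
    have h1 : ⟪x, (adjoint B ∘L B) x⟫ = ⟪B x, B x⟫ := by
      simp [ContinuousLinearMap.comp_apply, ContinuousLinearMap.adjoint_inner_right]
    have h2 : (0 : ℝ) ≤ ⟪B x, B x⟫ := real_inner_self_nonneg
    have h3 := hGpos x
    rw [ContinuousLinearMap.add_apply, inner_add_right]
    rw [h1]
    linarith
  obtain ⟨u, hu, hu_norm⟩ := coercive_isUnit (G + adjoint A ∘L A) c hc (coer A)
  refine ⟨(1 / c) * (2 * ‖A‖ + 1) * ((1 / c) * (‖G‖ + ‖A‖ ^ 2) + 1), by positivity,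
    1, one_pos, ?_⟩
  intro h hh0 hh1 Ah _ hAhA
  obtain ⟨v, hv, hv_norm⟩ := coercive_isUnit (G + adjoint Ah ∘L Ah) c hc (coer Ah)
  set D : H →L[ℝ] H := adjoint Ah ∘L Ah - adjoint A ∘L A with hD_def
  set P : H →L[ℝ] H := G - adjoint A ∘L A with hP_def
  -- rewrite Ring.inverse
  rw [← hu, ← hv, Ring.inverse_unit, Ring.inverse_unit]
  -- the algebraic identity
  have hsub : ((v⁻¹ : (H →L[ℝ] H)ˣ) : H →L[ℝ] H) - ((u⁻¹ : (H →L[ℝ] H)ˣ) : H →L[ℝ] H)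
      = -(↑v⁻¹ * D * ↑u⁻¹) := by
    have h1 : ((u : H →L[ℝ] H) - (v : H →L[ℝ] H)) = -D := by
      rw [hu, hv, hD_def]; abel
    have h2 : ((v⁻¹ : (H →L[ℝ] H)ˣ) : H →L[ℝ] H) * ((u : H →L[ℝ] H) - ↑v) * ↑u⁻¹
        = ↑v⁻¹ - ↑u⁻¹ := by
      rw [mul_sub, sub_mul, mul_assoc (↑v⁻¹ : H →L[ℝ] H) (↑u : H →L[ℝ] H) ↑u⁻¹]
      simp [Units.mul_inv, Units.inv_mul]
    rw [← h2, h1]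
    noncomm_ring
  have hid : ((v⁻¹ : (H →L[ℝ] H)ˣ) : H →L[ℝ] H) ∘L (G - adjoint Ah ∘L Ah)
      - ((u⁻¹ : (H →L[ℝ] H)ˣ) : H →L[ℝ] H) ∘L (G - adjoint A ∘L A)
      = -(↑v⁻¹ * D * (↑u⁻¹ * P + 1)) := by
    have hGA : G - adjoint Ah ∘L Ah = P - D := by rw [hP_def, hD_def]; abel
    show ((v⁻¹ : (H →L[ℝ] H)ˣ) : H →L[ℝ] H) * (G - adjoint Ah ∘L Ah)
        - ((u⁻¹ : (H →L[ℝ] H)ˣ) : H →L[ℝ] H) * P = _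
    rw [hGA]
    calc ((v⁻¹ : (H →L[ℝ] H)ˣ) : H →L[ℝ] H) * (P - D) - ↑u⁻¹ * P
        = (((v⁻¹ : (H →L[ℝ] H)ˣ) : H →L[ℝ] H) - ↑u⁻¹) * P - ↑v⁻¹ * D := by noncomm_ring
      _ = (-(↑v⁻¹ * D * ↑u⁻¹)) * P - ↑v⁻¹ * D := by rw [hsub]
      _ = -(↑v⁻¹ * D * (↑u⁻¹ * P + 1)) := by noncomm_ring
  rw [hid, norm_neg]
  -- norm estimates
  have hAh_norm : ‖Ah‖ ≤ ‖A‖ + h := by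
    calc ‖Ah‖ = ‖A + (Ah - A)‖ := by congr 1; abel
      _ ≤ ‖A‖ + ‖Ah - A‖ := norm_add_le _ _
      _ ≤ ‖A‖ + h := by linarith
  have hadj : ∀ (B : H →L[ℝ] Y), ‖adjoint B‖ = ‖B‖ := fun B =>
    LinearIsometryEquiv.norm_map (ContinuousLinearMap.adjoint) B
  have hD_norm : ‖D‖ ≤ (2 * ‖A‖ + 1) * h := by
    have hsplit : D = adjoint Ah ∘L (Ah - A) + adjoint (Ah - A) ∘L A := by
      rw [hD_def, map_sub]
      ext x
      simp [ContinuousLinearMap.comp_apply, map_sub]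
    rw [hsplit]
    have e1 : ‖adjoint Ah ∘L (Ah - A)‖ ≤ (‖A‖ + h) * h := by
      calc ‖adjoint Ah ∘L (Ah - A)‖ ≤ ‖adjoint Ah‖ * ‖Ah - A‖ :=
            ContinuousLinearMap.opNorm_comp_le _ _
        _ ≤ (‖A‖ + h) * h := by
            rw [hadj]
            exact mul_le_mul hAh_norm hAhA (norm_nonneg _) (by positivity)
    have e2 : ‖adjoint (Ah - A) ∘L A‖ ≤ h * ‖A‖ := by
      calc ‖adjoint (Ah - A) ∘L A‖ ≤ ‖adjoint (Ah - A)‖ * ‖A‖ :=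
            ContinuousLinearMap.opNorm_comp_le _ _
        _ ≤ h * ‖A‖ := by
            rw [hadj]
            exact mul_le_mul_of_nonneg_right hAhA (norm_nonneg _)
    calc ‖adjoint Ah ∘L (Ah - A) + adjoint (Ah - A) ∘L A‖
        ≤ ‖adjoint Ah ∘L (Ah - A)‖ + ‖adjoint (Ah - A) ∘L A‖ := norm_add_le _ _
      _ ≤ (‖A‖ + h) * h + h * ‖A‖ := add_le_add e1 e2
      _ ≤ (2 * ‖A‖ + 1) * h := by nlinarith
  have hP_norm : ‖P‖ ≤ ‖G‖ + ‖A‖ ^ 2 := by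
    calc ‖P‖ ≤ ‖G‖ + ‖adjoint A ∘L A‖ := norm_sub_le _ _
      _ ≤ ‖G‖ + ‖adjoint A‖ * ‖A‖ := by
          linarith [ContinuousLinearMap.opNorm_comp_le (adjoint A) A]
      _ = ‖G‖ + ‖A‖ ^ 2 := by rw [hadj]; ring
  have hZ_norm : ‖((u⁻¹ : (H →L[ℝ] H)ˣ) : H →L[ℝ] H) * P + 1‖
      ≤ (1 / c) * (‖G‖ + ‖A‖ ^ 2) + 1 := by
    calc ‖((u⁻¹ : (H →L[ℝ] H)ˣ) : H →L[ℝ] H) * P + 1‖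
        ≤ ‖((u⁻¹ : (H →L[ℝ] H)ˣ) : H →L[ℝ] H) * P‖ + ‖(1 : H →L[ℝ] H)‖ := norm_add_le _ _
      _ ≤ ‖((u⁻¹ : (H →L[ℝ] H)ˣ) : H →L[ℝ] H)‖ * ‖P‖ + 1 := by
          have := norm_mul_le ((u⁻¹ : (H →L[ℝ] H)ˣ) : H →L[ℝ] H) P
          have h1 : ‖(1 : H →L[ℝ] H)‖ ≤ 1 := ContinuousLinearMap.norm_id_le
          linarith
      _ ≤ (1 / c) * (‖G‖ + ‖A‖ ^ 2) + 1 := by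
          have := mul_le_mul hu_norm hP_norm (norm_nonneg _) (by positivity)
          linarith
  calc ‖((v⁻¹ : (H →L[ℝ] H)ˣ) : H →L[ℝ] H) * D * (↑u⁻¹ * P + 1)‖
      ≤ ‖((v⁻¹ : (H →L[ℝ] H)ˣ) : H →L[ℝ] H) * D‖ * ‖((u⁻¹ : (H →L[ℝ] H)ˣ) : H →L[ℝ] H) * P + 1‖ :=
        norm_mul_le _ _
    _ ≤ ‖((v⁻¹ : (H →L[ℝ] H)ˣ) : H →L[ℝ] H)‖ * ‖D‖ * ‖((u⁻¹ : (H →L[ℝ] H)ˣ) : H →L[ℝ] H) * P + 1‖ := by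
        have := norm_mul_le ((v⁻¹ : (H →L[ℝ] H)ˣ) : H →L[ℝ] H) D
        exact mul_le_mul_of_nonneg_right this (norm_nonneg _)
    _ ≤ (1 / c) * ((2 * ‖A‖ + 1) * h) * ((1 / c) * (‖G‖ + ‖A‖ ^ 2) + 1) := by
        apply mul_le_mul _ hZ_norm (norm_nonneg _) (by positivity)
        exact mul_le_mul hv_norm hD_norm (norm_nonneg _) (by positivity)
    _ = (1 / c) * (2 * ‖A‖ + 1) * ((1 / c) * (‖G‖ + ‖A‖ ^ 2) + 1) * h := by ring
end

section
/- Let A, A_h : L²(Ω) → Y be compact bounded linear operators with ‖A_h − A‖ ≤ h, and let G be a strictly positive definite self-adjoint bounded linear operator on L²(Ω). Then there exist constants C₂(A,G) > 0 and h₀(A,G) > 0, depending only on A and G, such that for all h ∈ (0, h₀]: ‖(G + A_h*A_h)⁻¹A_h* − (G + A*A)⁻¹A*‖ ≤ C₂(A,G) h. -/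
open MeasureTheory Filter Topology ContinuousLinearMap
open scoped RealInnerProductSpace

open ContinuousLinearMap
open scoped RealInnerProductSpace

lemma coercive_inverse' {V : Type*} [NormedAddCommGroup V] [InnerProductSpace ℝ V]
    [CompleteSpace V] (T : V →L[ℝ] V) (c : ℝ) (hc : 0 < c)
    (hT : ∀ x, c * ‖x‖ ^ 2 ≤ ⟪T x, x⟫) :
    ∃ S : V →L[ℝ] V, S ∘L T = 1 ∧ T ∘L S = 1 ∧ ‖S‖ ≤ 1 / c ∧ Ring.inverse T = S := by
  set B : V →L[ℝ] V →L[ℝ] ℝ := (innerSL ℝ).comp T with hB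
  have coercive : IsCoercive B := ⟨c, hc, fun u => by
    simpa [hB, mul_assoc, sq] using hT u⟩
  set e := coercive.continuousLinearEquivOfBilin with he
  have heT : ∀ v, T v = e v := fun v =>
    coercive.unique_continuousLinearEquivOfBilin (fun w => rfl)
  have hST : (e.symm : V →L[ℝ] V) ∘L T = 1 := by
    ext x; simp [comp_apply, heT x, one_apply]
  have hTS : T ∘L (e.symm : V →L[ℝ] V) = 1 := by
    ext y
    have h1 := heT (e.symm y)
    simp only [comp_apply, ContinuousLinearEquiv.coe_coe, one_apply, h1,
      ContinuousLinearEquiv.apply_symm_apply]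
    rfl
  have hnorm : ‖(e.symm : V →L[ℝ] V)‖ ≤ 1 / c := by
    refine opNorm_le_bound _ (by positivity) fun y => ?_
    set x := e.symm y with hx
    have hxe : (e.symm : V →L[ℝ] V) y = x := rfl
    rw [hxe]
    have hTx : T x = y := by
      have := heT x
      simp [this, hx, heT]
    have h1 : c * ‖x‖ ^ 2 ≤ ⟪T x, x⟫ := hT x
    rw [hTx] at h1
    have h2 : ⟪y, x⟫ ≤ ‖y‖ * ‖x‖ := real_inner_le_norm y x
    rcases eq_or_lt_of_le (norm_nonneg x) with h | h
    · rw [← h]; positivity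
    · rw [div_mul_eq_mul_div, le_div_iff₀ hc]
      nlinarith
  refine ⟨(e.symm : V →L[ℝ] V), hST, hTS, hnorm, ?_⟩
  have hu : IsUnit T := ⟨⟨T, (e.symm : V →L[ℝ] V), hTS, hST⟩, rfl⟩
  rcases hu with ⟨u, hu⟩
  rw [← hu, Ring.inverse_unit]
  have : (u : V →L[ℝ] V) ∘L (e.symm : V →L[ℝ] V) = 1 := by rw [hu]; exact hTS
  calc (↑u⁻¹ : V →L[ℝ] V) = ↑u⁻¹ ∘L ((u : V →L[ℝ] V) ∘L (e.symm : V →L[ℝ] V)) := by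
        rw [this]; ext x; simp
    _ = (↑u⁻¹ ∘L (u : V →L[ℝ] V)) ∘L (e.symm : V →L[ℝ] V) := by rw [comp_assoc]
    _ = (e.symm : V →L[ℝ] V) := by
        have : (↑u⁻¹ : V →L[ℝ] V) ∘L (u : V →L[ℝ] V) = 1 := u.inv_mul
        rw [this]; ext x; simp


set_option maxHeartbeats 1000000 in
/-- **Lemma 2, inequality (15).** There are constants `C₂(A,G) > 0` and `h₀(A,G) > 0`,
depending only on `A` and `G`, such that for all `h ∈ (0, h₀]` and every compact `A_h` with
`‖A_h − A‖ ≤ h` one has `‖(G + A_h*A_h)⁻¹A_h* − (G + A*A)⁻¹A*‖ ≤ C₂(A,G) h`. -/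
theorem stmt_4
    {d : ℕ} (Ω : Set (EuclideanSpace ℝ (Fin d)))
    (hΩ_open : IsOpen Ω) (hΩ_bdd : Bornology.IsBounded Ω)
    (ν : Measure (EuclideanSpace ℝ (Fin d))) (hν : ν = volume.restrict Ω)
    {Y : Type*} [NormedAddCommGroup Y] [InnerProductSpace ℝ Y] [CompleteSpace Y]
    (A : Lp ℝ 2 ν →L[ℝ] Y) (hA : IsCompactOperator ⇑A)
    (G : Lp ℝ 2 ν →L[ℝ] Lp ℝ 2 ν) (hGsa : IsSelfAdjoint G)
    (c : ℝ) (hc : 0 < c) (hGpos : ∀ x : Lp ℝ 2 ν, c * ‖x‖ ^ 2 ≤ ⟪x, G x⟫) :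
    ∃ C₂ > (0 : ℝ), ∃ h₀ > (0 : ℝ), ∀ h : ℝ, 0 < h → h ≤ h₀ →
      ∀ Ah : Lp ℝ 2 ν →L[ℝ] Y, IsCompactOperator ⇑Ah → ‖Ah - A‖ ≤ h →
        ‖Ring.inverse (G + adjoint Ah ∘L Ah) ∘L adjoint Ah
            - Ring.inverse (G + adjoint A ∘L A) ∘L adjoint A‖ ≤ C₂ * h := by
  -- coercivity of G + B† B for any B
  have coer : ∀ B : Lp ℝ 2 ν →L[ℝ] Y, ∀ x : Lp ℝ 2 ν,
      c * ‖x‖ ^ 2 ≤ ⟪(G + adjoint B ∘L B) x, x⟫ := by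
    intro B x
    have h1 : ⟪(G + adjoint B ∘L B) x, x⟫ = ⟪x, G x⟫ + ‖B x‖ ^ 2 := by
      rw [ContinuousLinearMap.add_apply, inner_add_left, real_inner_comm (G x) x,
        ContinuousLinearMap.comp_apply, adjoint_inner_left, real_inner_self_eq_norm_sq]
    rw [h1]
    nlinarith [hGpos x, sq_nonneg ‖B x‖]
  obtain ⟨S, hST, hTS, hSnorm, hSinv⟩ :=
    coercive_inverse' (G + adjoint A ∘L A) c hc (coer A)
  refine ⟨1 / c + (2 * ‖A‖ + 1) * ‖A‖ / c ^ 2, by positivity, 1, one_pos,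
    fun h hh hh1 Ah _ hAh => ?_⟩
  obtain ⟨Sh, hShT, hTSh, hShnorm, hShinv⟩ :=
    coercive_inverse' (G + adjoint Ah ∘L Ah) c hc (coer Ah)
  rw [hSinv, hShinv]
  set T : Lp ℝ 2 ν →L[ℝ] Lp ℝ 2 ν := G + adjoint A ∘L A with hTdef
  set Th : Lp ℝ 2 ν →L[ℝ] Lp ℝ 2 ν := G + adjoint Ah ∘L Ah with hThdef
  -- norm facts
  have hadj : ‖adjoint Ah - adjoint A‖ ≤ h := by
    rw [← map_sub (adjoint : (Lp ℝ 2 ν →L[ℝ] Y) ≃ₗᵢ⋆[ℝ] (Y →L[ℝ] Lp ℝ 2 ν)) Ah A]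
    rw [LinearIsometryEquiv.norm_map]
    exact hAh
  have hAhn : ‖Ah‖ ≤ ‖A‖ + 1 := by
    calc ‖Ah‖ = ‖A + (Ah - A)‖ := by congr 1; abel
      _ ≤ ‖A‖ + ‖Ah - A‖ := norm_add_le _ _
      _ ≤ ‖A‖ + 1 := by linarith
  have hTTh : ‖T - Th‖ ≤ (2 * ‖A‖ + 1) * h := by
    have hid : T - Th = adjoint A ∘L (A - Ah) + (adjoint A - adjoint Ah) ∘L Ah := by
      refine ContinuousLinearMap.ext fun x => ?_
      simp only [hTdef, hThdef, ContinuousLinearMap.sub_apply,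
        ContinuousLinearMap.add_apply, ContinuousLinearMap.comp_apply, map_sub]
      abel
    rw [hid]
    have h1 : ‖adjoint A ∘L (A - Ah)‖ ≤ ‖A‖ * h := by
      calc ‖adjoint A ∘L (A - Ah)‖ ≤ ‖adjoint A‖ * ‖A - Ah‖ :=
            ContinuousLinearMap.opNorm_comp_le _ _
        _ ≤ ‖A‖ * h := by
            rw [LinearIsometryEquiv.norm_map (adjoint : (Lp ℝ 2 ν →L[ℝ] Y) ≃ₗᵢ⋆[ℝ] (Y →L[ℝ] Lp ℝ 2 ν)) A]
            have : ‖A - Ah‖ ≤ h := by rw [norm_sub_rev]; exact hAh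
            exact mul_le_mul_of_nonneg_left this (norm_nonneg A)
    have h2 : ‖(adjoint A - adjoint Ah) ∘L Ah‖ ≤ h * (‖A‖ + 1) := by
      calc ‖(adjoint A - adjoint Ah) ∘L Ah‖ ≤ ‖adjoint A - adjoint Ah‖ * ‖Ah‖ :=
            ContinuousLinearMap.opNorm_comp_le _ _
        _ ≤ h * (‖A‖ + 1) := by
            have : ‖adjoint A - adjoint Ah‖ ≤ h := by rw [norm_sub_rev]; exact hadj
            exact mul_le_mul this hAhn (norm_nonneg _) hh.le
    calc ‖adjoint A ∘L (A - Ah) + (adjoint A - adjoint Ah) ∘L Ah‖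
        ≤ ‖adjoint A ∘L (A - Ah)‖ + ‖(adjoint A - adjoint Ah) ∘L Ah‖ := norm_add_le _ _
      _ ≤ ‖A‖ * h + h * (‖A‖ + 1) := add_le_add h1 h2
      _ = (2 * ‖A‖ + 1) * h := by ring
  -- the key identity
  have hid : Sh ∘L adjoint Ah - S ∘L adjoint A
      = Sh ∘L (adjoint Ah - adjoint A) + Sh ∘L ((T - Th) ∘L (S ∘L adjoint A)) := by
    refine ContinuousLinearMap.ext fun y => ?_
    have hTS' : ∀ z, T (S z) = z := fun z =>
      congrFun (congrArg DFunLike.coe hTS) z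
    have hShTh' : ∀ z, Sh (Th z) = z := fun z =>
      congrFun (congrArg DFunLike.coe hShT) z
    simp only [ContinuousLinearMap.sub_apply, ContinuousLinearMap.add_apply,
      ContinuousLinearMap.comp_apply, map_sub, hTS']
    rw [hShTh']
    abel
  rw [hid]
  have b1 : ‖Sh ∘L (adjoint Ah - adjoint A)‖ ≤ (1 / c) * h :=
    le_trans (ContinuousLinearMap.opNorm_comp_le _ _)
      (mul_le_mul hShnorm hadj (norm_nonneg _) (by positivity))
  have b2 : ‖Sh ∘L ((T - Th) ∘L (S ∘L adjoint A))‖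
      ≤ (1 / c) * ((2 * ‖A‖ + 1) * h * ((1 / c) * ‖A‖)) := by
    have hSA : ‖S ∘L adjoint A‖ ≤ (1 / c) * ‖A‖ := by
      refine le_trans (ContinuousLinearMap.opNorm_comp_le _ _) ?_
      rw [LinearIsometryEquiv.norm_map (adjoint : (Lp ℝ 2 ν →L[ℝ] Y) ≃ₗᵢ⋆[ℝ] (Y →L[ℝ] Lp ℝ 2 ν)) A]
      exact mul_le_mul_of_nonneg_right hSnorm (norm_nonneg A)
    have hmid : ‖(T - Th) ∘L (S ∘L adjoint A)‖ ≤ (2 * ‖A‖ + 1) * h * ((1 / c) * ‖A‖) := by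
      refine le_trans (ContinuousLinearMap.opNorm_comp_le _ _) ?_
      exact mul_le_mul hTTh hSA (norm_nonneg _) (by positivity)
    refine le_trans (ContinuousLinearMap.opNorm_comp_le _ _) ?_
    exact mul_le_mul hShnorm hmid (norm_nonneg _) (by positivity)
  calc ‖Sh ∘L (adjoint Ah - adjoint A) + Sh ∘L ((T - Th) ∘L (S ∘L adjoint A))‖
      ≤ ‖Sh ∘L (adjoint Ah - adjoint A)‖ + ‖Sh ∘L ((T - Th) ∘L (S ∘L adjoint A))‖ :=
        norm_add_le _ _
    _ ≤ (1 / c) * h + (1 / c) * ((2 * ‖A‖ + 1) * h * ((1 / c) * ‖A‖)) := add_le_add b1 b2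
    _ = (1 / c + (2 * ‖A‖ + 1) * ‖A‖ / c ^ 2) * h := by
        field_simp
end

section
/- Let A, A_h : L²(Ω) → Y be compact bounded linear operators with ‖A_h − A‖ ≤ h, let y^δ ∈ Y with ‖y^δ − y‖ ≤ δ, let the set X̄ = {x ∈ L²₊(Ω) : Ax = y} be non-empty with x̄ ∈ X̄, and let G = μI with μ > 0. Let (z^{h,δ}_k) and (z_k) be the sequences generated from the same starting element x₀ ∈ L²(Ω) by the iteration z_{k+1} = (G + B*B)⁻¹[(G − B*B)|z_k| + 2B* w] with (B,w) = (A_h, y^δ) and (B,w) = (A, y), respectively. Then there exist constants C₄ (depending only on A, G, x₀, x̄, y) and h₀ > 0 such that for all h ∈ (0, h₀] and all k: ‖z^{h,δ}_k − z_k‖ ≤ C₄(h + δ)k. -/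
open MeasureTheory Filter Topology ContinuousLinearMap
open scoped RealInnerProductSpace

section Prop2Helpers

variable {H Y' : Type*} [NormedAddCommGroup H] [InnerProductSpace ℝ H] [CompleteSpace H]
  [NormedAddCommGroup Y'] [InnerProductSpace ℝ Y'] [CompleteSpace Y']

private lemma prop2_coercive_lb (μ : ℝ) (B : H →L[ℝ] Y') (x : H) :
    μ * ‖x‖ * ‖x‖ ≤ ⟪(μ • (1 : H →L[ℝ] H) + adjoint B ∘L B) x, x⟫ := by
  have : (μ • (1 : H →L[ℝ] H) + adjoint B ∘L B) x = μ • x + adjoint B (B x) := by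
    simp [add_apply, smul_apply, one_apply]
  rw [this, inner_add_left, real_inner_smul_left, adjoint_inner_left,
    real_inner_self_eq_norm_mul_norm]
  nlinarith [real_inner_self_nonneg (x := B x)]

private lemma prop2_exists_inv (μ : ℝ) (hμ : 0 < μ) (B : H →L[ℝ] Y') :
    ∃ R : H →L[ℝ] H,
      (∀ x, R ((μ • (1 : H →L[ℝ] H) + adjoint B ∘L B) x) = x) ∧
      (∀ x, (μ • (1 : H →L[ℝ] H) + adjoint B ∘L B) (R x) = x) ∧
      Ring.inverse (μ • (1 : H →L[ℝ] H) + adjoint B ∘L B) = R := by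
  set P : H →L[ℝ] H := μ • (1 : H →L[ℝ] H) + adjoint B ∘L B with hP
  have coer : IsCoercive ((innerSL ℝ).comp P) := ⟨μ, hμ, fun u => prop2_coercive_lb μ B u⟩
  set e := coer.continuousLinearEquivOfBilin with he
  have hPe : ∀ v, e v = P v := by
    intro v
    exact (coer.unique_continuousLinearEquivOfBilin (v := v) (f := P v) (fun w => rfl)).symm
  refine ⟨(e.symm : H →L[ℝ] H), fun x => by simp [← hPe], fun x => by rw [← hPe]; simp, ?_⟩
  have hu : IsUnit P := by
    refine ⟨⟨P, (e.symm : H →L[ℝ] H), ?_, ?_⟩, rfl⟩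
    · ext x; simp only [mul_apply_eq_comp, one_apply_eq_self]; rw [← hPe]; simp
    · ext x; simp only [mul_apply_eq_comp, one_apply_eq_self]; rw [← hPe]; simp
  rcases hu with ⟨u, hu⟩
  rw [← hu, Ring.inverse_unit]
  have : (u : H →L[ℝ] H) * ((e.symm : H →L[ℝ] H)) = 1 := by
    rw [hu]; ext x; simp only [mul_apply_eq_comp, one_apply_eq_self]; rw [← hPe]; simp
  calc (↑u⁻¹ : H →L[ℝ] H) = ↑u⁻¹ * (↑u * (e.symm : H →L[ℝ] H)) := by rw [this, mul_one]
    _ = (e.symm : H →L[ℝ] H) := by rw [← mul_assoc, Units.inv_mul, one_mul]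

private lemma prop2_P_lb (μ : ℝ) (hμ : 0 < μ) (B : H →L[ℝ] Y') (x : H) :
    μ * ‖x‖ ≤ ‖(μ • (1 : H →L[ℝ] H) + adjoint B ∘L B) x‖ := by
  rcases eq_or_ne x 0 with rfl | hx
  · simp
  · have h1 := prop2_coercive_lb μ B x
    have h2 := real_inner_le_norm ((μ • (1 : H →L[ℝ] H) + adjoint B ∘L B) x) x
    have hx' : 0 < ‖x‖ := norm_pos_iff.mpr hx
    nlinarith

private lemma prop2_R_bound (μ : ℝ) (hμ : 0 < μ) (B : H →L[ℝ] Y') (R : H →L[ℝ] H)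
    (hR2 : ∀ x, (μ • (1 : H →L[ℝ] H) + adjoint B ∘L B) (R x) = x) (x : H) :
    ‖R x‖ ≤ μ⁻¹ * ‖x‖ := by
  have := prop2_P_lb μ hμ B (R x)
  rw [hR2 x] at this
  rw [inv_mul_eq_div, le_div_iff₀' hμ]
  exact this

private lemma prop2_Q_le_P (μ : ℝ) (hμ : 0 ≤ μ) (B : H →L[ℝ] Y') (x : H) :
    ‖(μ • (1 : H →L[ℝ] H) - adjoint B ∘L B) x‖
      ≤ ‖(μ • (1 : H →L[ℝ] H) + adjoint B ∘L B) x‖ := by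
  have hQ : (μ • (1 : H →L[ℝ] H) - adjoint B ∘L B) x = μ • x - adjoint B (B x) := by
    simp [sub_apply, smul_apply, one_apply]
  have hP : (μ • (1 : H →L[ℝ] H) + adjoint B ∘L B) x = μ • x + adjoint B (B x) := by
    simp [add_apply, smul_apply, one_apply]
  rw [hQ, hP]
  have key : ‖μ • x - adjoint B (B x)‖ ^ 2 ≤ ‖μ • x + adjoint B (B x)‖ ^ 2 := by
    rw [norm_sub_sq_real, norm_add_sq_real, real_inner_smul_left, adjoint_inner_right]
    have : (0:ℝ) ≤ ⟪B x, B x⟫ := real_inner_self_nonneg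
    nlinarith
  nlinarith [norm_nonneg (μ • x - adjoint B (B x)), norm_nonneg (μ • x + adjoint B (B x))]

private lemma prop2_PQ_comm (μ : ℝ) (B : H →L[ℝ] Y') (x : H) :
    (μ • (1 : H →L[ℝ] H) + adjoint B ∘L B) ((μ • (1 : H →L[ℝ] H) - adjoint B ∘L B) x)
    = (μ • (1 : H →L[ℝ] H) - adjoint B ∘L B) ((μ • (1 : H →L[ℝ] H) + adjoint B ∘L B) x) := by
  simp only [add_apply, sub_apply, smul_apply, one_apply_eq_self, map_add, map_sub,
    ContinuousLinearMap.map_smul]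
  abel

private lemma prop2_T_contract (μ : ℝ) (hμ : 0 < μ) (B : H →L[ℝ] Y') (R : H →L[ℝ] H)
    (hR1 : ∀ x, R ((μ • (1 : H →L[ℝ] H) + adjoint B ∘L B) x) = x)
    (hR2 : ∀ x, (μ • (1 : H →L[ℝ] H) + adjoint B ∘L B) (R x) = x) (x : H) :
    ‖R ((μ • (1 : H →L[ℝ] H) - adjoint B ∘L B) x)‖ ≤ ‖x‖ := by
  set P := μ • (1 : H →L[ℝ] H) + adjoint B ∘L B
  set Q := μ • (1 : H →L[ℝ] H) - adjoint B ∘L B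
  have hcomm : R (Q x) = Q (R x) := by
    conv_lhs => rw [← hR2 x, ← prop2_PQ_comm, hR1]
  rw [hcomm]
  calc ‖Q (R x)‖ ≤ ‖P (R x)‖ := prop2_Q_le_P μ hμ.le B (R x)
    _ = ‖x‖ := by rw [hR2]

end Prop2Helpers

set_option maxHeartbeats 2000000 in
/-- **Proposition 2.** Stability estimate for Algorithm 1: the noisy and noise-free iterates
started from the same `x₀` satisfy `‖z^{h,δ}_k − z_k‖ ≤ C₄ (h + δ) k` for all `h ∈ (0, h₀]`,
with `C₄, h₀` depending only on `A`, `G = μI`, `x₀`, `x̄`, `y`. -/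
theorem stmt_7
    {d : ℕ} (Ω : Set (EuclideanSpace ℝ (Fin d)))
    (hΩ_open : IsOpen Ω) (hΩ_bdd : Bornology.IsBounded Ω)
    (ν : Measure (EuclideanSpace ℝ (Fin d))) (hν : ν = volume.restrict Ω)
    {Y : Type*} [NormedAddCommGroup Y] [InnerProductSpace ℝ Y] [CompleteSpace Y]
    (A : Lp ℝ 2 ν →L[ℝ] Y) (hA : IsCompactOperator ⇑A)
    (y : Y) (xbar : Lp ℝ 2 ν) (hxbar : 0 ≤ xbar) (hAxbar : A xbar = y)
    (μ₀ : ℝ) (hμ₀ : 0 < μ₀) (x₀ : Lp ℝ 2 ν) :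
    ∃ C₄ > (0 : ℝ), ∃ h₀ > (0 : ℝ), ∀ h δ : ℝ, 0 < h → h ≤ h₀ → 0 ≤ δ →
      ∀ Ah : Lp ℝ 2 ν →L[ℝ] Y, IsCompactOperator ⇑Ah → ‖Ah - A‖ ≤ h →
      ∀ yδ : Y, ‖yδ - y‖ ≤ δ →
      ∀ zn z : ℕ → Lp ℝ 2 ν, zn 0 = x₀ → z 0 = x₀ →
      (∀ j, zn (j + 1) =
        Ring.inverse (μ₀ • (1 : Lp ℝ 2 ν →L[ℝ] Lp ℝ 2 ν) + adjoint Ah ∘L Ah)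
          ((μ₀ • (1 : Lp ℝ 2 ν →L[ℝ] Lp ℝ 2 ν) - adjoint Ah ∘L Ah) (|zn j|)
            + (2 : ℝ) • adjoint Ah yδ)) →
      (∀ j, z (j + 1) =
        Ring.inverse (μ₀ • (1 : Lp ℝ 2 ν →L[ℝ] Lp ℝ 2 ν) + adjoint A ∘L A)
          ((μ₀ • (1 : Lp ℝ 2 ν →L[ℝ] Lp ℝ 2 ν) - adjoint A ∘L A) (|z j|)
            + (2 : ℝ) • adjoint A y)) →
      ∀ j : ℕ, ‖zn j - z j‖ ≤ C₄ * (h + δ) * (j : ℝ) := by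
  classical
  set a : ℝ := ‖A‖ with ha
  set M : ℝ := ‖xbar‖ + ‖x₀ - xbar‖ with hM
  have hMnn : 0 ≤ M := by positivity
  have hμinv : (0:ℝ) ≤ μ₀⁻¹ := inv_nonneg.mpr hμ₀.le
  have hann : (0:ℝ) ≤ a := norm_nonneg A
  -- constants
  set c1 : ℝ := μ₀⁻¹ * (2*a+1) * M with hc1def
  set c2 : ℝ := μ₀⁻¹ * (2*a+1) * μ₀⁻¹ * ((μ₀ + a^2) * M) with hc2def
  set c3 : ℝ := 2 * (μ₀⁻¹ * (a+1)) with hc3def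
  set c4 : ℝ := 2 * (μ₀⁻¹ * ‖y‖) with hc4def
  set c5 : ℝ := 2 * (μ₀⁻¹ * ((2*a+1) * (μ₀⁻¹ * (a * ‖y‖)))) with hc5def
  have hc1 : 0 ≤ c1 := by rw [hc1def]; positivity
  have hc2 : 0 ≤ c2 := by
    rw [hc2def]
    have : 0 ≤ μ₀ + a^2 := by positivity
    have h21 : (0:ℝ) ≤ 2*a+1 := by positivity
    exact mul_nonneg (mul_nonneg (mul_nonneg hμinv h21) hμinv) (mul_nonneg this hMnn)
  have hc3 : 0 ≤ c3 := by rw [hc3def]; positivity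
  have hc4 : 0 ≤ c4 := by rw [hc4def]; positivity
  have hc5 : 0 ≤ c5 := by rw [hc5def]; positivity
  refine ⟨c1 + c2 + c3 + c4 + c5 + 1, by linarith, 1, one_pos, ?_⟩
  intro h δ hh hh1 hδ Ah hAh hAhA yδ hyδ zn z hzn0 hz0 hzn hz
  set C₄ : ℝ := c1 + c2 + c3 + c4 + c5 + 1 with hC4
  -- inverses
  obtain ⟨R, hR1, hR2, hRinv⟩ := prop2_exists_inv μ₀ hμ₀ A
  obtain ⟨Rh, hRh1, hRh2, hRhinv⟩ := prop2_exists_inv μ₀ hμ₀ Ah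
  set P : Lp ℝ 2 ν →L[ℝ] Lp ℝ 2 ν := μ₀ • (1 : Lp ℝ 2 ν →L[ℝ] Lp ℝ 2 ν) + adjoint A ∘L A with hPdef
  set Q : Lp ℝ 2 ν →L[ℝ] Lp ℝ 2 ν := μ₀ • (1 : Lp ℝ 2 ν →L[ℝ] Lp ℝ 2 ν) - adjoint A ∘L A with hQdef
  set Ph : Lp ℝ 2 ν →L[ℝ] Lp ℝ 2 ν := μ₀ • (1 : Lp ℝ 2 ν →L[ℝ] Lp ℝ 2 ν) + adjoint Ah ∘L Ah with hPhdef
  set Qh : Lp ℝ 2 ν →L[ℝ] Lp ℝ 2 ν := μ₀ • (1 : Lp ℝ 2 ν →L[ℝ] Lp ℝ 2 ν) - adjoint Ah ∘L Ah with hQhdef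
  have hzrec : ∀ j, z (j+1) = R (Q (|z j|) + (2:ℝ) • adjoint A y) := by
    intro j; rw [hz j, hRinv]
  have hznrec : ∀ j, zn (j+1) = Rh (Qh (|zn j|) + (2:ℝ) • adjoint Ah yδ) := by
    intro j; rw [hzn j, hRhinv]
  -- operator norm facts
  have hAhnorm : ‖Ah‖ ≤ a + 1 := by
    calc ‖Ah‖ = ‖A + (Ah - A)‖ := by rw [add_sub_cancel]
      _ ≤ ‖A‖ + ‖Ah - A‖ := norm_add_le _ _
      _ ≤ a + 1 := by have := le_trans hAhA hh1; linarith
  -- difference of the normal operators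
  have hS : ∀ x : Lp ℝ 2 ν, ‖(adjoint Ah ∘L Ah) x - (adjoint A ∘L A) x‖ ≤ (2*a+1) * h * ‖x‖ := by
    intro x
    have hdec : (adjoint Ah ∘L Ah) x - (adjoint A ∘L A) x
        = adjoint Ah ((Ah - A) x) + (adjoint (Ah - A)) (A x) := by
      simp only [comp_apply, map_sub, sub_apply]
      abel
    rw [hdec]
    have e1 : ‖adjoint Ah ((Ah - A) x)‖ ≤ (a+1) * (h * ‖x‖) := by
      calc ‖adjoint Ah ((Ah - A) x)‖ ≤ ‖adjoint Ah‖ * ‖(Ah - A) x‖ := le_opNorm _ _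
        _ ≤ (a+1) * (h * ‖x‖) := by
            have h1 : ‖adjoint Ah‖ = ‖Ah‖ := LinearIsometryEquiv.norm_map _ _
            have h2 : ‖(Ah - A) x‖ ≤ h * ‖x‖ := by
              calc ‖(Ah - A) x‖ ≤ ‖Ah - A‖ * ‖x‖ := le_opNorm _ _
                _ ≤ h * ‖x‖ := mul_le_mul_of_nonneg_right hAhA (norm_nonneg x)
            rw [h1]
            exact mul_le_mul hAhnorm h2 (norm_nonneg _) (by positivity)
    have e2 : ‖(adjoint (Ah - A)) (A x)‖ ≤ h * (a * ‖x‖) := by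
      calc ‖(adjoint (Ah - A)) (A x)‖ ≤ ‖adjoint (Ah - A)‖ * ‖A x‖ := le_opNorm _ _
        _ ≤ h * (a * ‖x‖) := by
            have h1 : ‖adjoint (Ah - A)‖ = ‖Ah - A‖ := LinearIsometryEquiv.norm_map _ _
            rw [h1]
            exact mul_le_mul hAhA (le_opNorm A x) (norm_nonneg _) hh.le
    calc ‖adjoint Ah ((Ah - A) x) + (adjoint (Ah - A)) (A x)‖
        ≤ ‖adjoint Ah ((Ah - A) x)‖ + ‖(adjoint (Ah - A)) (A x)‖ := norm_add_le _ _
      _ ≤ (a+1) * (h * ‖x‖) + h * (a * ‖x‖) := add_le_add e1 e2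
      _ = (2*a+1) * h * ‖x‖ := by ring
  -- difference of the resolvents
  have hRdiff : ∀ x : Lp ℝ 2 ν, ‖Rh x - R x‖ ≤ μ₀⁻¹ * ((2*a+1) * h * (μ₀⁻¹ * ‖x‖)) := by
    intro x
    have e1 : x = Ph (R x) + ((adjoint A ∘L A) (R x) - (adjoint Ah ∘L Ah) (R x)) := by
      conv_lhs => rw [← hR2 x]
      rw [hPdef, hPhdef]
      simp only [add_apply, smul_apply, one_apply]
      abel
    have e2 : Rh x = R x + Rh ((adjoint A ∘L A) (R x) - (adjoint Ah ∘L Ah) (R x)) := by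
      conv_lhs => rw [e1]
      rw [map_add, hRh1]
    rw [e2, add_sub_cancel_left]
    calc ‖Rh ((adjoint A ∘L A) (R x) - (adjoint Ah ∘L Ah) (R x))‖
        ≤ μ₀⁻¹ * ‖(adjoint A ∘L A) (R x) - (adjoint Ah ∘L Ah) (R x)‖ :=
          prop2_R_bound μ₀ hμ₀ Ah Rh hRh2 _
      _ ≤ μ₀⁻¹ * ((2*a+1) * h * ‖R x‖) := by
          apply mul_le_mul_of_nonneg_left _ hμinv
          rw [norm_sub_rev]
          exact hS (R x)
      _ ≤ μ₀⁻¹ * ((2*a+1) * h * (μ₀⁻¹ * ‖x‖)) := by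
          apply mul_le_mul_of_nonneg_left _ hμinv
          apply mul_le_mul_of_nonneg_left (prop2_R_bound μ₀ hμ₀ A R hR2 x)
          positivity
  -- fixed point
  have habs_xbar : |xbar| = xbar := abs_of_nonneg hxbar
  have hfix : R (Q (|xbar|) + (2:ℝ) • adjoint A y) = xbar := by
    rw [habs_xbar]
    have h1 : Q xbar + (2:ℝ) • adjoint A y = P xbar := by
      rw [← hAxbar]
      have h2 : adjoint A (A xbar) = (adjoint A ∘L A) xbar := rfl
      rw [h2, hQdef, hPdef]
      simp only [sub_apply, add_apply, smul_apply, one_apply]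
      module
    rw [h1, hR1]
  -- boundedness of the noise-free iterates
  have hbz : ∀ j, ‖z j - xbar‖ ≤ ‖x₀ - xbar‖ := by
    intro j
    induction j with
    | zero => rw [hz0]
    | succ j ih =>
      have e1 : z (j+1) - xbar = R (Q (|z j| - |xbar|)) := by
        rw [hzrec j]
        conv_lhs => rw [← hfix]
        rw [← map_sub, map_sub Q]
        congr 1
        abel
      rw [e1]
      calc ‖R (Q (|z j| - |xbar|))‖ ≤ ‖|z j| - |xbar|‖ :=
            prop2_T_contract μ₀ hμ₀ A R hR1 hR2 _
        _ ≤ ‖z j - xbar‖ := norm_abs_sub_abs _ _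
        _ ≤ ‖x₀ - xbar‖ := ih
  have hMz : ∀ j, ‖z j‖ ≤ M := by
    intro j
    calc ‖z j‖ = ‖(z j - xbar) + xbar‖ := by rw [sub_add_cancel]
      _ ≤ ‖z j - xbar‖ + ‖xbar‖ := norm_add_le _ _
      _ ≤ M := by rw [hM]; linarith [hbz j]
  -- the one-step estimate
  have hstep : ∀ j, ‖zn (j+1) - z (j+1)‖
      ≤ ‖zn j - z j‖ + (c1*h + c2*h + c3*δ + c4*h + c5*h) := by
    intro j
    set v : Lp ℝ 2 ν := |z j| with hv
    have hvM : ‖v‖ ≤ M := by rw [hv, norm_abs_eq_norm]; exact hMz j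
    have decomp : zn (j+1) - z (j+1) =
        Rh (Qh (|zn j| - |z j|))
        + (Rh (Qh v - Q v) + (Rh (Q v) - R (Q v)))
        + (2:ℝ) • (Rh (adjoint Ah (yδ - y)) + Rh (adjoint (Ah - A) y)
            + (Rh (adjoint A y) - R (adjoint A y))) := by
      rw [hznrec j, hzrec j, hv]
      simp only [map_add, map_sub, ContinuousLinearMap.map_smul, sub_apply]
      module
    rw [decomp]
    have b1 : ‖Rh (Qh (|zn j| - |z j|))‖ ≤ ‖zn j - z j‖ :=
      le_trans (prop2_T_contract μ₀ hμ₀ Ah Rh hRh1 hRh2 _) (norm_abs_sub_abs _ _)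
    have b2 : ‖Rh (Qh v - Q v)‖ ≤ c1 * h := by
      have e : Qh v - Q v = (adjoint A ∘L A) v - (adjoint Ah ∘L Ah) v := by
        rw [hQhdef, hQdef]; simp only [sub_apply, smul_apply, one_apply]; abel
      calc ‖Rh (Qh v - Q v)‖ ≤ μ₀⁻¹ * ‖Qh v - Q v‖ := prop2_R_bound μ₀ hμ₀ Ah Rh hRh2 _
        _ ≤ μ₀⁻¹ * ((2*a+1)*h*M) := by
            apply mul_le_mul_of_nonneg_left _ hμinv
            rw [e, norm_sub_rev]
            refine le_trans (hS v) ?_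
            apply mul_le_mul_of_nonneg_left hvM
            positivity
        _ = c1 * h := by rw [hc1def]; ring
    have hQv : ‖Q v‖ ≤ (μ₀ + a^2) * M := by
      have : Q v = μ₀ • v - adjoint A (A v) := by
        rw [hQdef]; simp [sub_apply, smul_apply, one_apply]
      rw [this]
      calc ‖μ₀ • v - adjoint A (A v)‖ ≤ ‖μ₀ • v‖ + ‖adjoint A (A v)‖ := norm_sub_le _ _
        _ ≤ μ₀ * ‖v‖ + a * (a * ‖v‖) := by
            have t1 : ‖μ₀ • v‖ = μ₀ * ‖v‖ := by
              rw [norm_smul, Real.norm_eq_abs, abs_of_pos hμ₀]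
            have t2 : ‖adjoint A (A v)‖ ≤ a * (a * ‖v‖) := by
              calc ‖adjoint A (A v)‖ ≤ ‖adjoint A‖ * ‖A v‖ := le_opNorm _ _
                _ ≤ a * (a * ‖v‖) := by
                    have hn : ‖adjoint A‖ = ‖A‖ := LinearIsometryEquiv.norm_map _ _
                    rw [hn, ← ha]
                    exact mul_le_mul_of_nonneg_left (le_opNorm A v) hann
            linarith
        _ ≤ (μ₀ + a^2) * M := by nlinarith [norm_nonneg v]
    have b3 : ‖Rh (Q v) - R (Q v)‖ ≤ c2 * h := by
      calc ‖Rh (Q v) - R (Q v)‖ ≤ μ₀⁻¹ * ((2*a+1) * h * (μ₀⁻¹ * ‖Q v‖)) := hRdiff _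
        _ ≤ μ₀⁻¹ * ((2*a+1) * h * (μ₀⁻¹ * ((μ₀ + a^2) * M))) := by
            apply mul_le_mul_of_nonneg_left _ hμinv
            apply mul_le_mul_of_nonneg_left _ (by positivity)
            exact mul_le_mul_of_nonneg_left hQv hμinv
        _ = c2 * h := by rw [hc2def]; ring
    have b4 : ‖Rh (adjoint Ah (yδ - y))‖ ≤ μ₀⁻¹ * ((a+1) * δ) := by
      calc ‖Rh (adjoint Ah (yδ - y))‖ ≤ μ₀⁻¹ * ‖adjoint Ah (yδ - y)‖ :=
            prop2_R_bound μ₀ hμ₀ Ah Rh hRh2 _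
        _ ≤ μ₀⁻¹ * ((a+1) * δ) := by
            apply mul_le_mul_of_nonneg_left _ hμinv
            calc ‖adjoint Ah (yδ - y)‖ ≤ ‖adjoint Ah‖ * ‖yδ - y‖ := le_opNorm _ _
              _ ≤ (a+1) * δ := by
                  have h1 : ‖adjoint Ah‖ = ‖Ah‖ := LinearIsometryEquiv.norm_map _ _
                  rw [h1]
                  exact mul_le_mul hAhnorm hyδ (norm_nonneg _) (by positivity)
    have b5 : ‖Rh (adjoint (Ah - A) y)‖ ≤ μ₀⁻¹ * (h * ‖y‖) := by
      calc ‖Rh (adjoint (Ah - A) y)‖ ≤ μ₀⁻¹ * ‖adjoint (Ah - A) y‖ :=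
            prop2_R_bound μ₀ hμ₀ Ah Rh hRh2 _
        _ ≤ μ₀⁻¹ * (h * ‖y‖) := by
            apply mul_le_mul_of_nonneg_left _ hμinv
            calc ‖adjoint (Ah - A) y‖ ≤ ‖adjoint (Ah - A)‖ * ‖y‖ := le_opNorm _ _
              _ ≤ h * ‖y‖ := by
                  have h1 : ‖adjoint (Ah - A)‖ = ‖Ah - A‖ := LinearIsometryEquiv.norm_map _ _
                  rw [h1]
                  exact mul_le_mul_of_nonneg_right hAhA (norm_nonneg y)
    have b6 : ‖Rh (adjoint A y) - R (adjoint A y)‖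
        ≤ μ₀⁻¹ * ((2*a+1) * h * (μ₀⁻¹ * (a * ‖y‖))) := by
      refine le_trans (hRdiff _) ?_
      apply mul_le_mul_of_nonneg_left _ hμinv
      apply mul_le_mul_of_nonneg_left _ (by positivity)
      have hy' : ‖adjoint A y‖ ≤ a * ‖y‖ := by
        calc ‖adjoint A y‖ ≤ ‖adjoint A‖ * ‖y‖ := le_opNorm _ _
          _ = a * ‖y‖ := by
              rw [show ‖adjoint A‖ = ‖A‖ from LinearIsometryEquiv.norm_map _ _, ← ha]
      exact mul_le_mul_of_nonneg_left hy' hμinv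
    calc ‖Rh (Qh (|zn j| - |z j|))
        + (Rh (Qh v - Q v) + (Rh (Q v) - R (Q v)))
        + (2:ℝ) • (Rh (adjoint Ah (yδ - y)) + Rh (adjoint (Ah - A) y)
            + (Rh (adjoint A y) - R (adjoint A y)))‖
        ≤ ‖Rh (Qh (|zn j| - |z j|))‖
          + (‖Rh (Qh v - Q v)‖ + ‖Rh (Q v) - R (Q v)‖)
          + 2 * (‖Rh (adjoint Ah (yδ - y))‖ + ‖Rh (adjoint (Ah - A) y)‖
              + ‖Rh (adjoint A y) - R (adjoint A y)‖) := by
          refine le_trans (norm_add₃_le) ?_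
          gcongr
          · exact norm_add_le _ _
          · rw [norm_smul]
            simp only [Real.norm_ofNat]
            gcongr
            exact norm_add₃_le
      _ ≤ ‖zn j - z j‖ + (c1*h + c2*h + c3*δ + c4*h + c5*h) := by
          rw [hc3def, hc4def, hc5def]
          have := b1; have := b2; have := b3; have := b4; have := b5; have := b6
          nlinarith [b1, b2, b3, b4, b5, b6]
  -- conclusion by induction
  intro j
  induction j with
  | zero => simp [hzn0, hz0]
  | succ j ih =>
    have hsum : c1*h + c2*h + c3*δ + c4*h + c5*h ≤ C₄ * (h + δ) := by
      rw [hC4]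
      nlinarith [mul_nonneg hc1 hδ, mul_nonneg hc2 hδ, mul_nonneg hc3 hh.le,
        mul_nonneg hc4 hδ, mul_nonneg hc5 hδ, hh.le, hδ]
    calc ‖zn (j+1) - z (j+1)‖ ≤ ‖zn j - z j‖ + (c1*h + c2*h + c3*δ + c4*h + c5*h) :=
          hstep j
      _ ≤ C₄ * (h + δ) * j + C₄ * (h + δ) := add_le_add ih hsum
      _ = C₄ * (h + δ) * (↑(j+1) : ℝ) := by push_cast; ring
end

section
/- Let φ and ψ be index functions on (0, ‖A*A‖]. (i) If ψ is covered by φ and φ satisfies sup over λ ∈ (0, ‖A*A‖] of φ(λ)|g_k(λ)| ≤ γ φ(k⁻¹) for all k (with g_k(λ) = ((μ−λ)/(μ+λ))^k and some γ > 0), then ψ satisfies the analogous inequality sup over λ of ψ(λ)|g_k(λ)| ≤ γ' ψ(k⁻¹) with some γ' > 0. (ii) If the quotient function λ ↦ φ(λ)/ψ(λ) is increasing on (0, λ̄] for some λ̄ > 0, then ψ is covered by φ. (iii) If ψ is concave on (0, λ̄], then ψ is covered by φ(λ) = λ. -/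
open MeasureTheory Filter Topology ContinuousLinearMap
open scoped RealInnerProductSpace

/-- An index function: continuous, strictly increasing and positive on `(0,∞)`,
tending to `0` as `λ → 0+`. -/
def IsIndexFunction (φ : ℝ → ℝ) : Prop :=
  ContinuousOn φ (Set.Ioi 0) ∧ StrictMonoOn φ (Set.Ioi 0) ∧
    (∀ t : ℝ, 0 < t → 0 < φ t) ∧ Tendsto φ (nhdsWithin 0 (Set.Ioi 0)) (nhds 0)

/-- `ψ` is covered by `φ` on `(0, M]`: there is `c̲ > 0` with
`c̲ φ(α)/ψ(α) ≤ inf_{α ≤ λ ≤ M} φ(λ)/ψ(λ)` for all sufficiently small `α > 0`. -/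
def CoveredBy (M : ℝ) (ψ φ : ℝ → ℝ) : Prop :=
  ∃ c > (0 : ℝ), ∃ α₀ > (0 : ℝ), ∀ α : ℝ, 0 < α → α ≤ α₀ →
    ∀ lam : ℝ, α ≤ lam → lam ≤ M → c * (φ α / ψ α) ≤ φ lam / ψ lam


lemma gk_abs_le_one {μ₀ lam : ℝ} (hμ : 0 < μ₀) (hlam : 0 < lam) (k : ℕ) :
    |((μ₀ - lam) / (μ₀ + lam)) ^ k| ≤ 1 := by
  rw [abs_pow]
  apply pow_le_one₀ (abs_nonneg _)
  rw [abs_div]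
  rw [div_le_one (by rw [abs_of_pos (by linarith)]; linarith)]
  rw [abs_of_pos (show (0:ℝ) < μ₀ + lam by linarith)]
  rw [abs_le]
  constructor <;> linarith

lemma coveredBy_of_monotone (M : ℝ) (φ ψ : ℝ → ℝ) (hφ : IsIndexFunction φ)
    (hψ : IsIndexFunction ψ) (lbar : ℝ) (hlbar : 0 < lbar)
    (hmono : MonotoneOn (fun lam => φ lam / ψ lam) (Set.Ioc 0 lbar)) :
    CoveredBy M ψ φ := by
  obtain ⟨hφc, hφm, hφp, -⟩ := hφ
  obtain ⟨hψc, hψm, hψp, -⟩ := hψ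
  by_cases hM : M ≤ lbar
  · refine ⟨1, one_pos, lbar, hlbar, fun α hα hαl lam hlam hlamM => ?_⟩
    rw [one_mul]
    exact hmono ⟨hα, hαl⟩ ⟨lt_of_lt_of_le hα hlam, hlamM.trans hM⟩ hlam
  · push_neg at hM
    -- continuous positive function on [lbar, M]
    have hsub : Set.Icc lbar M ⊆ Set.Ioi 0 := fun x hx => lt_of_lt_of_le hlbar hx.1
    have hcont : ContinuousOn (fun x => φ x / ψ x) (Set.Icc lbar M) := by
      apply ContinuousOn.div ((hφc.mono hsub)) ((hψc.mono hsub))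
      exact fun x hx => ne_of_gt (hψp x (hsub hx))
    obtain ⟨x0, hx0K, hminOn⟩ := isCompact_Icc.exists_isMinOn
      ⟨lbar, Set.left_mem_Icc.mpr hM.le⟩ hcont
    set m := φ x0 / ψ x0 with hm
    have hx0pos : 0 < x0 := hsub hx0K
    have hmpos : 0 < m := div_pos (hφp _ hx0pos) (hψp _ hx0pos)
    set B := φ lbar / ψ lbar with hB
    have hBpos : 0 < B := div_pos (hφp _ hlbar) (hψp _ hlbar)
    refine ⟨min 1 (m / B), lt_min one_pos (div_pos hmpos hBpos), lbar, hlbar,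
      fun α hα hαl lam hlam hlamM => ?_⟩
    have hratα : 0 < φ α / ψ α := div_pos (hφp _ hα) (hψp _ hα)
    have hαB : φ α / ψ α ≤ B := hmono ⟨hα, hαl⟩ ⟨hlbar, le_refl _⟩ hαl
    by_cases hcase : lam ≤ lbar
    · calc min 1 (m / B) * (φ α / ψ α) ≤ 1 * (φ α / ψ α) :=
            mul_le_mul_of_nonneg_right (min_le_left _ _) hratα.le
        _ = φ α / ψ α := one_mul _
        _ ≤ φ lam / ψ lam := hmono ⟨hα, hαl⟩ ⟨lt_of_lt_of_le hα hlam, hcase⟩ hlam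
    · push_neg at hcase
      have hmem : lam ∈ Set.Icc lbar M := ⟨hcase.le, hlamM⟩
      calc min 1 (m / B) * (φ α / ψ α) ≤ (m / B) * B := by
            apply mul_le_mul (min_le_right _ _) hαB hratα.le
            exact le_of_lt (div_pos hmpos hBpos)
        _ = m := by field_simp
        _ ≤ φ lam / ψ lam := hminOn hmem

lemma mono_of_concave (ψ : ℝ → ℝ) (hψ : IsIndexFunction ψ) (lbar : ℝ) (hlbar : 0 < lbar)
    (hconc : ConcaveOn ℝ (Set.Ioc 0 lbar) ψ) :
    MonotoneOn (fun lam => lam / ψ lam) (Set.Ioc 0 lbar) := by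
  obtain ⟨-, -, hψp, hψ0⟩ := hψ
  intro a ha b hb hab
  rcases eq_or_lt_of_le hab with rfl | hlt
  · exact le_refl _
  simp only
  rw [div_le_div_iff₀ (hψp _ ha.1) (hψp _ hb.1)]
  -- show a * ψ b ≤ b * ψ a via limit ε → 0+
  have key : ∀ ε : ℝ, ε ∈ Set.Ioo 0 a → (a - ε) / (b - ε) * (b * ψ b) ≤ b * ψ a := by
    intro ε hε
    have hs : 0 < b - ε := by linarith [hε.2]
    have hεmem : ε ∈ Set.Ioc 0 lbar := ⟨hε.1, le_trans (le_of_lt hε.2) (hab.trans hb.2)⟩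
    have hθ0 : (0:ℝ) ≤ (b - a) / (b - ε) := div_nonneg (by linarith) hs.le
    have hθ1 : (0:ℝ) ≤ (a - ε) / (b - ε) := div_nonneg (by linarith [hε.2]) hs.le
    have hsum : (b - a) / (b - ε) + (a - ε) / (b - ε) = 1 := by field_simp; ring
    have hcc := hconc.2 hεmem hb hθ0 hθ1 hsum
    simp only [smul_eq_mul] at hcc
    have harg : (b - a) / (b - ε) * ε + (a - ε) / (b - ε) * b = a := by field_simp; ring
    rw [harg] at hcc
    have h1 : (a - ε) / (b - ε) * ψ b ≤ ψ a := by
      have := mul_nonneg hθ0 (hψp _ hε.1).le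
      linarith
    calc (a - ε) / (b - ε) * (b * ψ b) = b * ((a - ε) / (b - ε) * ψ b) := by ring
      _ ≤ b * ψ a := mul_le_mul_of_nonneg_left h1 (by linarith [hb.1])
  have hbne : b ≠ 0 := ne_of_gt hb.1
  have hcontAt : ContinuousAt (fun ε : ℝ => (a - ε) / (b - ε) * (b * ψ b)) 0 := by
    apply ContinuousAt.mul _ continuousAt_const
    exact (continuousAt_const.sub continuousAt_id).div
      (continuousAt_const.sub continuousAt_id) (by simpa using hbne)
  have htend : Tendsto (fun ε : ℝ => (a - ε) / (b - ε) * (b * ψ b))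
      (nhdsWithin 0 (Set.Ioi 0)) (nhds (a / b * (b * ψ b))) := by
    have := hcontAt.tendsto
    simp only [sub_zero] at this
    exact this.mono_left nhdsWithin_le_nhds
  have hev : ∀ᶠ ε in nhdsWithin (0:ℝ) (Set.Ioi 0),
      (a - ε) / (b - ε) * (b * ψ b) ≤ b * ψ a := by
    filter_upwards [Ioo_mem_nhdsGT_of_mem (Set.left_mem_Ico.mpr ha.1)] with ε hε
    exact key ε hε
  have hle := le_of_tendsto htend hev
  have h2 : a / b * (b * ψ b) = a * ψ b := by field_simp
  linarith

/-- **Proposition 4.** (i) If `ψ` is covered by `φ` and `φ` satisfies the qualification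
inequality for the filter `g_k(λ) = ((μ−λ)/(μ+λ))^k`, then so does `ψ`; (ii) if `φ/ψ` is
increasing near `0`, then `ψ` is covered by `φ`; (iii) a concave index function is covered
by `φ(λ) = λ`. -/
theorem stmt_12
    {X Y : Type*} [NormedAddCommGroup X] [InnerProductSpace ℝ X] [CompleteSpace X]
    [NormedAddCommGroup Y] [InnerProductSpace ℝ Y] [CompleteSpace Y]
    (A : X →L[ℝ] Y) (μ₀ : ℝ) (hμ₀ : 0 < μ₀)
    (φ ψ : ℝ → ℝ) (hφ : IsIndexFunction φ) (hψ : IsIndexFunction ψ) :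
    -- (i)
    (CoveredBy ‖adjoint A ∘L A‖ ψ φ →
      ∀ γ : ℝ, 0 < γ →
      (∀ k : ℕ, 1 ≤ k → ∀ lam : ℝ, 0 < lam → lam ≤ ‖adjoint A ∘L A‖ →
        φ lam * |((μ₀ - lam) / (μ₀ + lam)) ^ k| ≤ γ * φ ((k : ℝ)⁻¹)) →
      ∃ γ' > (0 : ℝ), ∀ k : ℕ, 1 ≤ k → ∀ lam : ℝ, 0 < lam → lam ≤ ‖adjoint A ∘L A‖ →
        ψ lam * |((μ₀ - lam) / (μ₀ + lam)) ^ k| ≤ γ' * ψ ((k : ℝ)⁻¹))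
    ∧
    -- (ii)
    (∀ lbar : ℝ, 0 < lbar →
      MonotoneOn (fun lam => φ lam / ψ lam) (Set.Ioc 0 lbar) →
      CoveredBy ‖adjoint A ∘L A‖ ψ φ)
    ∧
    -- (iii)
    (∀ lbar : ℝ, 0 < lbar → ConcaveOn ℝ (Set.Ioc 0 lbar) ψ →
      CoveredBy ‖adjoint A ∘L A‖ ψ (fun lam => lam)) := by
  set M : ℝ := ‖adjoint A ∘L A‖ with hMdef
  obtain ⟨hφc, hφm, hφp, hφ0⟩ := hφ
  obtain ⟨hψc, hψm, hψp, hψ0⟩ := hψ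
  refine ⟨?_, ?_, ?_⟩
  · -- (i)
    rintro ⟨c, hc, α₀, hα₀, hcov⟩ γ hγ hqual
    refine ⟨max (max 1 (γ / c)) (ψ (max M α₀) / ψ α₀),
      lt_of_lt_of_le one_pos (le_trans (le_max_left _ _) (le_max_left _ _)), ?_⟩
    intro k hk lam hlam hlamM
    have hkpos : (0:ℝ) < (k : ℝ)⁻¹ := by positivity
    have hψk : 0 < ψ ((k:ℝ)⁻¹) := hψp _ hkpos
    set g : ℝ := |((μ₀ - lam) / (μ₀ + lam)) ^ k| with hgdef
    have hg0 : 0 ≤ g := abs_nonneg _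
    have hg1 : g ≤ 1 := gk_abs_le_one hμ₀ hlam k
    have hMpos : 0 < M := lt_of_lt_of_le hlam hlamM
    by_cases hsmall : (k:ℝ)⁻¹ ≤ α₀
    · by_cases hcase : lam ≤ (k:ℝ)⁻¹
      · -- ψ lam ≤ ψ (1/k)
        have h1 : ψ lam ≤ ψ ((k:ℝ)⁻¹) := hψm.monotoneOn hlam hkpos hcase
        calc ψ lam * g ≤ ψ lam * 1 := mul_le_mul_of_nonneg_left hg1 (hψp _ hlam).le
          _ = ψ lam := mul_one _
          _ ≤ 1 * ψ ((k:ℝ)⁻¹) := by rw [one_mul]; exact h1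
          _ ≤ max (max 1 (γ / c)) (ψ (max M α₀) / ψ α₀) * ψ ((k:ℝ)⁻¹) := by
            apply mul_le_mul_of_nonneg_right _ hψk.le
            exact le_trans (le_max_left _ _) (le_max_left _ _)
      · push_neg at hcase
        have hcov' := hcov ((k:ℝ)⁻¹) hkpos hsmall lam hcase.le hlamM
        have hq := hqual k hk lam hlam hlamM
        set α : ℝ := (k:ℝ)⁻¹
        have hφα : 0 < φ α := hφp _ hkpos
        have hψα : 0 < ψ α := hψk
        have hψl : 0 < ψ lam := hψp _ hlam
        -- from hcov' : c * (φ α / ψ α) ≤ φ lam / ψ lam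
        have hc1 : c * φ α * ψ lam ≤ φ lam * ψ α := by
          rw [mul_div_assoc'] at hcov'
          rw [div_le_div_iff₀ hψα hψl] at hcov'
          linarith
        have h2 : c * φ α * ψ lam * g ≤ φ lam * ψ α * g :=
          mul_le_mul_of_nonneg_right hc1 hg0
        have h3 : φ lam * g * ψ α ≤ γ * φ α * ψ α := by
          have := mul_le_mul_of_nonneg_right hq hψα.le
          linarith [this]
        have h4 : φ α * (c * (ψ lam * g)) ≤ φ α * (γ * ψ α) := by nlinarith [h2, h3]
        have h5 : c * (ψ lam * g) ≤ γ * ψ α := le_of_mul_le_mul_left h4 hφα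
        have h6 : ψ lam * g ≤ γ / c * ψ α := by
          rw [div_mul_eq_mul_div, le_div_iff₀ hc]
          linarith
        calc ψ lam * g ≤ γ / c * ψ α := h6
          _ ≤ max (max 1 (γ / c)) (ψ (max M α₀) / ψ α₀) * ψ α := by
            apply mul_le_mul_of_nonneg_right _ hψα.le
            exact le_trans (le_max_right _ _) (le_max_left _ _)
    · push_neg at hsmall
      have hmaxpos : 0 < max M α₀ := lt_max_of_lt_right hα₀
      have h1 : ψ lam ≤ ψ (max M α₀) :=
        hψm.monotoneOn hlam hmaxpos (le_trans hlamM (le_max_left _ _))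
      have h2 : ψ α₀ ≤ ψ ((k:ℝ)⁻¹) := hψm.monotoneOn hα₀ hkpos hsmall.le
      have hψα₀ : 0 < ψ α₀ := hψp _ hα₀
      have hψmax : 0 < ψ (max M α₀) := hψp _ hmaxpos
      calc ψ lam * g ≤ ψ lam * 1 := mul_le_mul_of_nonneg_left hg1 (hψp _ hlam).le
        _ = ψ lam := mul_one _
        _ ≤ ψ (max M α₀) := h1
        _ = (ψ (max M α₀) / ψ α₀) * ψ α₀ := by field_simp
        _ ≤ (ψ (max M α₀) / ψ α₀) * ψ ((k:ℝ)⁻¹) :=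
            mul_le_mul_of_nonneg_left h2 (div_pos hψmax hψα₀).le
        _ ≤ max (max 1 (γ / c)) (ψ (max M α₀) / ψ α₀) * ψ ((k:ℝ)⁻¹) :=
            mul_le_mul_of_nonneg_right (le_max_right _ _) hψk.le
  · -- (ii)
    intro lbar hlbar hmono
    exact coveredBy_of_monotone M φ ψ ⟨hφc, hφm, hφp, hφ0⟩ ⟨hψc, hψm, hψp, hψ0⟩
      lbar hlbar hmono
  · -- (iii)
    intro lbar hlbar hconc
    have hid : IsIndexFunction (fun lam : ℝ => lam) :=
      ⟨continuousOn_id, fun x _ y _ h => h, fun t ht => ht,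
        tendsto_id.mono_left nhdsWithin_le_nhds⟩
    exact coveredBy_of_monotone M (fun lam => lam) ψ hid ⟨hψc, hψm, hψp, hψ0⟩
      lbar hlbar (mono_of_concave ψ ⟨hψc, hψm, hψp, hψ0⟩ lbar hlbar hconc)
end
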